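/- arXiv:1301.6646 — 9 statements merged into one kernel-verified Lean document; each statement's English description precedes it below -/
import Mathlib

section
/- Assume that the map γ ↦ U(γ)φ is injective on G, that γ_1, …, γ_K are pairwise distinct, that δ_1, …, δ_K are pairwise distinct, and that all coefficients c_i and d_i are strictly positive. Assume further that every finite subfamily of {φ_χ : χ ∈ 𝒯_d} of cardinality at most 2K is linearly independent. If there exists η₀ ∈ G such that U(η₀)p = q and η₀ ∘ γ_i ∈ 𝒯_d for every i ∈ {1,…,K}, then for every i ∈ {1,…,K} there exists j ∈ {1,…,K} with η₀ ∘ γ_i = δ_j; in particular η₀ ∈ 𝒯_a^{p,q} and inf_{η ∈ 𝒯_a^{p,q}} ‖U(η)p − q‖ = 0. -/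
/-- with a linearly independent dictionary, if the sparse patterns
are exactly related by `η₀` (with atoms staying in the dictionary), then `η₀`
maps each atom of `p` to an atom of `q`; in particular `η₀` is a
feature-to-feature transformation and the approximate registration error is 0. -/
theorem stmt2 {H G : Type*} [NormedAddCommGroup H] [InnerProductSpace ℝ H]
    [Group G] (U : G →* (H ≃ₗᵢ[ℝ] H)) (φ : H) (Td : Set G)
    (hinj : Function.Injective fun γ : G => U γ φ)
    (K : ℕ) (hK : 1 ≤ K)
    (γ δ : Fin K → G) (hγTd : ∀ i, γ i ∈ Td) (hδTd : ∀ i, δ i ∈ Td)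
    (hγinj : Function.Injective γ) (hδinj : Function.Injective δ)
    (c d : Fin K → ℝ) (hc : ∀ i, 0 < c i) (hd : ∀ i, 0 < d i)
    (p q : H) (hp : p = ∑ i, c i • U (γ i) φ) (hq : q = ∑ i, d i • U (δ i) φ)
    (hLI : ∀ n : ℕ, n ≤ 2 * K → ∀ χ : Fin n → G, (∀ i, χ i ∈ Td) →
      Function.Injective χ → LinearIndependent ℝ fun i => U (χ i) φ)
    (η₀ : G) (hη₀ : U η₀ p = q) (hη₀Td : ∀ i, η₀ * γ i ∈ Td) :
    (∀ i, ∃ j, η₀ * γ i = δ j) ∧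
    (∃ i j, η₀ = δ i * (γ j)⁻¹) ∧
    sInf ((fun η => ‖U η p - q‖) '' {η : G | ∃ i j, η = δ i * (γ j)⁻¹}) = 0 := by
  classical
  set S : Finset G :=
    (Finset.univ.image fun i => η₀ * γ i) ∪ Finset.univ.image δ with hS
  have hcard : S.card ≤ 2 * K := by
    calc S.card ≤ (Finset.univ.image fun i => η₀ * γ i).card
          + (Finset.univ.image δ).card := Finset.card_union_le _ _
      _ ≤ K + K := by
          gcongr <;> exact (Finset.card_image_le).trans (by simp)
      _ = 2 * K := by ring
  have hmemγ : ∀ i, η₀ * γ i ∈ S := by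
    intro i; exact Finset.mem_union_left _ (Finset.mem_image_of_mem _ (Finset.mem_univ i))
  have hmemδ : ∀ i, δ i ∈ S := by
    intro i; exact Finset.mem_union_right _ (Finset.mem_image_of_mem _ (Finset.mem_univ i))
  set e : ↥S ≃ Fin S.card := S.equivFin with he
  set χ : Fin S.card → G := fun i => ((e.symm i : ↥S) : G) with hχ
  have hχTd : ∀ i, χ i ∈ Td := by
    intro i
    have hx : ((e.symm i : ↥S) : G) ∈ S := (e.symm i).2
    rcases Finset.mem_union.mp hx with hx | hx
    · obtain ⟨j, -, hj⟩ := Finset.mem_image.mp hx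
      show ((e.symm i : ↥S) : G) ∈ Td
      rw [← hj]; exact hη₀Td j
    · obtain ⟨j, -, hj⟩ := Finset.mem_image.mp hx
      show ((e.symm i : ↥S) : G) ∈ Td
      rw [← hj]; exact hδTd j
  have hχinj : Function.Injective χ := fun a b h =>
    e.symm.injective (Subtype.ext h)
  have LI := hLI S.card hcard χ hχTd hχinj
  -- the coefficient function
  set a : G → ℝ := fun x =>
    (∑ i ∈ Finset.univ.filter (fun i => η₀ * γ i = x), c i)
    - (∑ j ∈ Finset.univ.filter (fun j => δ j = x), d j) with ha
  have h1 : ∑ x ∈ S, (∑ i ∈ Finset.univ.filter (fun i => η₀ * γ i = x), c i) • U x φ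
      = ∑ i, c i • U (η₀ * γ i) φ := by
    rw [← Finset.sum_fiberwise_of_maps_to (fun i _ => hmemγ i)
      (fun i => c i • U (η₀ * γ i) φ)]
    refine Finset.sum_congr rfl fun x hx => ?_
    rw [Finset.sum_smul]
    exact Finset.sum_congr rfl fun i hi => by rw [(Finset.mem_filter.mp hi).2]
  have h2 : ∑ x ∈ S, (∑ j ∈ Finset.univ.filter (fun j => δ j = x), d j) • U x φ
      = ∑ j, d j • U (δ j) φ := by
    rw [← Finset.sum_fiberwise_of_maps_to (fun j _ => hmemδ j)
      (fun j => d j • U (δ j) φ)]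
    refine Finset.sum_congr rfl fun x hx => ?_
    rw [Finset.sum_smul]
    exact Finset.sum_congr rfl fun j hj => by rw [(Finset.mem_filter.mp hj).2]
  have hUp : (U η₀) p = ∑ i, c i • U (η₀ * γ i) φ := by
    rw [hp, map_sum]
    refine Finset.sum_congr rfl fun i _ => ?_
    rw [LinearIsometryEquiv.map_smul, map_mul]
    rfl
  have hsum0 : ∑ x ∈ S, a x • U x φ = 0 := by
    have : ∑ x ∈ S, a x • U x φ
        = (∑ x ∈ S, (∑ i ∈ Finset.univ.filter (fun i => η₀ * γ i = x), c i) • U x φ)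
          - ∑ x ∈ S, (∑ j ∈ Finset.univ.filter (fun j => δ j = x), d j) • U x φ := by
      rw [← Finset.sum_sub_distrib]
      exact Finset.sum_congr rfl fun x _ => by rw [ha, sub_smul]
    rw [this, h1, h2, ← hUp, ← hq, hη₀, sub_self]
  have hzero : ∀ x ∈ S, a x = 0 := by
    have hsum' : ∑ i : Fin S.card, a (χ i) • U (χ i) φ = 0 := by
      rw [← hsum0, ← Finset.sum_coe_sort S (fun x => a x • U x φ)]
      exact Equiv.sum_comp e.symm (fun x : ↥S => a (x : G) • U (x : G) φ)
    have := (Fintype.linearIndependent_iff.mp LI) (fun i => a (χ i)) hsum'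
    intro x hx
    have := this (e ⟨x, hx⟩)
    simpa [hχ] using this
  have part1 : ∀ i, ∃ j, η₀ * γ i = δ j := by
    intro i
    have hx := hzero (η₀ * γ i) (hmemγ i)
    simp only [ha] at hx
    have hfil : Finset.univ.filter (fun j => η₀ * γ j = η₀ * γ i) = {i} := by
      ext j
      simp only [Finset.mem_filter, Finset.mem_univ, true_and, Finset.mem_singleton]
      constructor
      · intro h; exact hγinj (mul_left_cancel h)
      · rintro rfl; rfl
    rw [hfil, Finset.sum_singleton, sub_eq_zero] at hx
    by_contra hcon
    push_neg at hcon
    have : Finset.univ.filter (fun j => δ j = η₀ * γ i) = ∅ := by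
      ext j
      simp only [Finset.mem_filter, Finset.mem_univ, true_and, Finset.notMem_empty,
        iff_false]
      exact fun h => hcon j h.symm
    rw [this, Finset.sum_empty] at hx
    exact absurd hx (ne_of_gt (hc i))
  refine ⟨part1, ?_, ?_⟩
  · obtain ⟨j, hj⟩ := part1 ⟨0, hK⟩
    exact ⟨j, ⟨0, hK⟩, by rw [eq_mul_inv_iff_mul_eq]; exact hj⟩
  · have hmemη : η₀ ∈ {η : G | ∃ i j, η = δ i * (γ j)⁻¹} := by
      obtain ⟨j, hj⟩ := part1 ⟨0, hK⟩
      exact ⟨j, ⟨0, hK⟩, by rw [eq_mul_inv_iff_mul_eq]; exact hj⟩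
    have h0mem : (0 : ℝ) ∈ (fun η => ‖U η p - q‖) '' {η : G | ∃ i j, η = δ i * (γ j)⁻¹} := by
      refine ⟨η₀, hmemη, ?_⟩
      simp [hη₀]
    apply le_antisymm
    · exact csInf_le ⟨0, fun b hb => by
        obtain ⟨η, -, rfl⟩ := hb; exact norm_nonneg _⟩ h0mem
    · refine le_csInf ⟨0, h0mem⟩ ?_
      rintro b ⟨η, -, rfl⟩
      exact norm_nonneg _
end

section
/- Assume: (i) ‖φ‖ = 1 and the map γ ↦ U(γ)φ is injective on G; (ii) ⟨φ_γ, φ_δ⟩ ≥ 0 for all γ, δ ∈ 𝒯_d; (iii) all coefficients c_i and d_i are strictly positive; (iv) there exists η₀ ∈ G with ‖U(η₀)p − q‖ ≤ ‖U(η)p − q‖ for every η ∈ G, and moreover η₀ ∘ γ_i ∈ 𝒯_d and η₀⁻¹ ∘ δ_i ∈ 𝒯_d for all i; (v) ‖U(η₀)p − q‖ < ε · √(‖c‖₂² + ‖d‖₂²) for some ε > 0; (vi) for some α with 0 ≤ α < √2, every family (φ_{χ_1}, …, φ_{χ_{2K}}) with χ_1, …, χ_{2K} ∈ 𝒯_d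 is (ε, α)-robustly linearly independent; (vii) there is ρ ≥ 0 such that for all γ, γ' ∈ 𝒯_d and all η ∈ G, ‖U(η)φ_{γ'} − φ_{γ'}‖ ≤ ρ · ‖U(η)φ_γ − φ_γ‖ (the transformation inconsistency of the dictionary is at most ρ). Then inf_{η ∈ 𝒯_a^{p,q}} ‖U(η)p − q‖ − ‖U(η₀)p − q‖ ≤ α ρ · min(‖c‖₁, ‖d‖₁), where ‖c‖₁ = Σ_{i=1}^K |c_i| and ‖c‖₂ is the Euclidean norm. -/
/-- A finite family of (nonzero) vectors is `(ε, α)`-robustly linearly independent: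
any linear combination of norm `< ε · ‖a‖₂` contains two vectors that nearly
cancel each other after normalization. -/
def IsRLI {E : Type*} [NormedAddCommGroup E] [NormedSpace ℝ E] {n : ℕ}
    (w : Fin n → E) (ε α : ℝ) : Prop :=
  ∀ a : Fin n → ℝ, ‖∑ i, a i • w i‖ < ε * Real.sqrt (∑ i, a i ^ 2) →
    ∃ i j, a i ≠ 0 ∧ a j ≠ 0 ∧
      ‖‖a i • w i‖⁻¹ • (a i • w i) + ‖a j • w j‖⁻¹ • (a j • w j)‖ ≤ α

lemma normalize_smul_pos {E : Type*} [NormedAddCommGroup E] [NormedSpace ℝ E]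
    {w : E} (hw : ‖w‖ = 1) {t : ℝ} (ht : 0 < t) : ‖t • w‖⁻¹ • (t • w) = w := by
  rw [norm_smul, hw, mul_one, Real.norm_eq_abs, abs_of_pos ht, smul_smul,
    inv_mul_cancel₀ ht.ne', one_smul]

lemma normalize_smul_neg {E : Type*} [NormedAddCommGroup E] [NormedSpace ℝ E]
    {w : E} (hw : ‖w‖ = 1) {t : ℝ} (ht : t < 0) : ‖t • w‖⁻¹ • (t • w) = -w := by
  rw [norm_smul, hw, mul_one, Real.norm_eq_abs, abs_of_neg ht, smul_smul]
  have h : (-t)⁻¹ * t = -1 := by rw [inv_neg, neg_mul, inv_mul_cancel₀ ht.ne]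
  rw [h, neg_one_smul]

lemma sqrt_two_le_norm_add {E : Type*} [NormedAddCommGroup E] [InnerProductSpace ℝ E]
    {u v : E} (hu : ‖u‖ = 1) (hv : ‖v‖ = 1) (h : 0 ≤ (inner ℝ u v : ℝ)) :
    Real.sqrt 2 ≤ ‖u + v‖ := by
  have h2 : (2:ℝ) ≤ ‖u+v‖^2 := by
    rw [norm_add_sq_real, hu, hv]; nlinarith
  calc Real.sqrt 2 ≤ Real.sqrt (‖u+v‖^2) := Real.sqrt_le_sqrt h2
    _ = ‖u+v‖ := Real.sqrt_sq (norm_nonneg _)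

/-- main theorem, bound on the registration error of the algorithm
in terms of the RLI parameter `α` and the transformation inconsistency `ρ`. -/
theorem stmt3 {H G : Type*} [NormedAddCommGroup H] [InnerProductSpace ℝ H]
    [Group G] (U : G →* (H ≃ₗᵢ[ℝ] H)) (φ : H) (Td : Set G)
    (hφ : ‖φ‖ = 1) (hinj : Function.Injective fun γ : G => U γ φ)
    (hpos : ∀ γ ∈ Td, ∀ δ ∈ Td, 0 ≤ (inner ℝ (U γ φ) (U δ φ) : ℝ))
    (K : ℕ) (hK : 1 ≤ K)
    (γ δ : Fin K → G) (hγTd : ∀ i, γ i ∈ Td) (hδTd : ∀ i, δ i ∈ Td)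
    (c d : Fin K → ℝ) (hc : ∀ i, 0 < c i) (hd : ∀ i, 0 < d i)
    (p q : H) (hp : p = ∑ i, c i • U (γ i) φ) (hq : q = ∑ i, d i • U (δ i) φ)
    (η₀ : G) (hopt : ∀ η : G, ‖U η₀ p - q‖ ≤ ‖U η p - q‖)
    (hη₀γ : ∀ i, η₀ * γ i ∈ Td) (hη₀δ : ∀ i, η₀⁻¹ * δ i ∈ Td)
    (ε : ℝ) (hε : 0 < ε)
    (hsmall : ‖U η₀ p - q‖ < ε * Real.sqrt (∑ i, c i ^ 2 + ∑ i, d i ^ 2))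
    (α : ℝ) (hα0 : 0 ≤ α) (hα : α < Real.sqrt 2)
    (hRLI : ∀ χ : Fin (2 * K) → G, (∀ i, χ i ∈ Td) →
      IsRLI (fun i => U (χ i) φ) ε α)
    (ρ : ℝ) (hρ0 : 0 ≤ ρ)
    (hinc : ∀ γ' ∈ Td, ∀ γ'' ∈ Td, ∀ η : G,
      ‖U η (U γ'' φ) - U γ'' φ‖ ≤ ρ * ‖U η (U γ' φ) - U γ' φ‖) :
    sInf ((fun η => ‖U η p - q‖) '' {η : G | ∃ i j, η = δ i * (γ j)⁻¹})
      - ‖U η₀ p - q‖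
      ≤ α * ρ * min (∑ i, |c i|) (∑ i, |d i|) := by
  classical
  set χ : Fin (2*K) → G := fun i => Fin.append (fun k => η₀ * γ k) δ (Fin.cast (two_mul K) i)
    with hχdef
  set a : Fin (2*K) → ℝ := fun i => Fin.append c (fun k => -(d k)) (Fin.cast (two_mul K) i)
    with hadef
  have hχTd : ∀ i, χ i ∈ Td := by
    intro i
    rw [hχdef]
    refine Fin.addCases (motive := fun j => Fin.append (fun k => η₀ * γ k) δ j ∈ Td)
      ?_ ?_ (Fin.cast (two_mul K) i)
    · intro k; rw [Fin.append_left]; exact hη₀γ k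
    · intro k; rw [Fin.append_right]; exact hδTd k
  have hUmul : ∀ (g h : G) (x : H), U (g * h) x = U g (U h x) := by
    intro g h x; rw [map_mul]; rfl
  have h1 : ∑ i, a i • U (χ i) φ = U η₀ p - q := by
    rw [Fintype.sum_equiv (finCongr (two_mul K))
      (fun i => a i • U (χ i) φ)
      (fun j => (Fin.append c (fun k => -(d k)) j) • U (Fin.append (fun k => η₀ * γ k) δ j) φ)
      (fun i => rfl)]
    rw [Fin.sum_univ_add]
    simp only [Fin.append_left, Fin.append_right]
    rw [hp, hq, map_sum]
    simp [hUmul, sub_eq_add_neg, ← Finset.sum_neg_distrib, neg_smul]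
  have h2 : ∑ i, a i ^ 2 = ∑ i, c i ^ 2 + ∑ i, d i ^ 2 := by
    rw [Fintype.sum_equiv (finCongr (two_mul K))
      (fun i => a i ^ 2)
      (fun j => (Fin.append c (fun k => -(d k)) j) ^ 2)
      (fun i => rfl)]
    rw [Fin.sum_univ_add]
    simp only [Fin.append_left, Fin.append_right, neg_sq]
  obtain ⟨i, j, hai, haj, hnij⟩ := hRLI χ hχTd a (by rw [h1, h2]; exact hsmall)
  have hw1 : ∀ i, ‖U (χ i) φ‖ = 1 := fun i => by rw [(U _).norm_map, hφ]
  have classify : ∀ i : Fin (2*K),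
      (∃ k, χ i = η₀ * γ k ∧ a i = c k) ∨ (∃ k, χ i = δ k ∧ a i = -(d k)) := by
    intro i
    rw [hχdef, hadef]
    refine Fin.addCases (motive := fun j =>
        (∃ k, Fin.append (fun k => η₀ * γ k) δ j = η₀ * γ k ∧
          Fin.append c (fun k => -(d k)) j = c k) ∨
        (∃ k, Fin.append (fun k => η₀ * γ k) δ j = δ k ∧
          Fin.append c (fun k => -(d k)) j = -(d k)))
      ?_ ?_ (Fin.cast (two_mul K) i)
    · intro k; left; exact ⟨k, Fin.append_left _ _ _, Fin.append_left _ _ _⟩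
    · intro k; right; exact ⟨k, Fin.append_right _ _ _, Fin.append_right _ _ _⟩
  have samecon : ∀ i j : Fin (2*K), ¬ (‖U (χ i) φ + U (χ j) φ‖ ≤ α) := by
    intro i j hcon
    have := sqrt_two_le_norm_add (hw1 i) (hw1 j) (hpos _ (hχTd i) _ (hχTd j))
    linarith
  have key : ∃ i' j' : Fin K, ‖U (η₀ * γ j') φ - U (δ i') φ‖ ≤ α := by
    rcases classify i with ⟨ki, hχi, hai'⟩ | ⟨ki, hχi, hai'⟩ <;>
      rcases classify j with ⟨kj, hχj, haj'⟩ | ⟨kj, hχj, haj'⟩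
    · rw [hai', normalize_smul_pos (hw1 i) (hc ki),
        haj', normalize_smul_pos (hw1 j) (hc kj)] at hnij
      exact absurd hnij (samecon i j)
    · rw [hai', normalize_smul_pos (hw1 i) (hc ki),
        haj', normalize_smul_neg (hw1 j) (neg_lt_zero.mpr (hd kj))] at hnij
      refine ⟨kj, ki, ?_⟩
      rw [← hχi, ← hχj]
      simpa [sub_eq_add_neg] using hnij
    · rw [hai', normalize_smul_neg (hw1 i) (neg_lt_zero.mpr (hd ki)),
        haj', normalize_smul_pos (hw1 j) (hc kj)] at hnij
      refine ⟨ki, kj, ?_⟩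
      rw [← hχi, ← hχj]
      rw [add_comm] at hnij
      simpa [sub_eq_add_neg] using hnij
    · rw [hai', normalize_smul_neg (hw1 i) (neg_lt_zero.mpr (hd ki)),
        haj', normalize_smul_neg (hw1 j) (neg_lt_zero.mpr (hd kj)),
        ← neg_add, norm_neg] at hnij
      exact absurd hnij (samecon i j)
  obtain ⟨i', j', hkey⟩ := key
  set η₁ : G := δ i' * (γ j')⁻¹ with hη₁
  -- bound 1 : through p
  have hb1 : ‖U η₁ p - q‖ ≤ ‖U η₀ p - q‖ + α * ρ * ∑ k, |c k| := by
    set η : G := η₀⁻¹ * η₁ with hηdef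
    have e1 : ∀ k, ‖U η (U (γ k) φ) - U (γ k) φ‖ ≤ ρ * α := by
      intro k
      refine (hinc (γ j') (hγTd j') (γ k) (hγTd k) η).trans ?_
      have hg : η * γ j' = η₀⁻¹ * δ i' := by rw [hηdef, hη₁]; group
      have : U η (U (γ j') φ) = U (η₀⁻¹ * δ i') φ := by rw [← hUmul, hg]
      rw [this]
      refine mul_le_mul_of_nonneg_left ?_ hρ0
      have : ‖U (η₀⁻¹ * δ i') φ - U (γ j') φ‖ = ‖U (δ i') φ - U (η₀ * γ j') φ‖ := by
        rw [← (U η₀).norm_map, map_sub, ← hUmul, ← hUmul]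
        congr 2
        group
      rw [this, norm_sub_rev]
      exact hkey
    have e2 : ‖U η p - p‖ ≤ (∑ k, |c k|) * (ρ * α) := by
      have hsplit : U η p - p = ∑ k, c k • (U η (U (γ k) φ) - U (γ k) φ) := by
        rw [hp, map_sum]
        simp [smul_sub, Finset.sum_sub_distrib]
      rw [hsplit]
      refine (norm_sum_le _ _).trans ?_
      rw [Finset.sum_mul]
      refine Finset.sum_le_sum fun k _ => ?_
      rw [norm_smul, Real.norm_eq_abs]
      exact mul_le_mul_of_nonneg_left (e1 k) (abs_nonneg _)
    have e3 : ‖U η₁ p - U η₀ p‖ = ‖U η p - p‖ := by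
      have h4 : U η₀ (U η p - p) = U η₁ p - U η₀ p := by
        rw [map_sub, ← hUmul]
        congr 2
        rw [hηdef]; group
      rw [← h4, (U η₀).norm_map]
    have e4 : ‖U η₁ p - q‖ ≤ ‖U η₁ p - U η₀ p‖ + ‖U η₀ p - q‖ := by
      have := norm_add_le (U η₁ p - U η₀ p) (U η₀ p - q)
      simpa using this
    have : (∑ k, |c k|) * (ρ * α) = α * ρ * ∑ k, |c k| := by ring
    linarith [e4, e3 ▸ e2, this]
  -- bound 2 : through q
  have hb2 : ‖U η₁ p - q‖ ≤ ‖U η₀ p - q‖ + α * ρ * ∑ k, |d k| := by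
    set η : G := η₀ * η₁⁻¹ with hηdef
    have e1 : ∀ k, ‖U η (U (δ k) φ) - U (δ k) φ‖ ≤ ρ * α := by
      intro k
      refine (hinc (δ i') (hδTd i') (δ k) (hδTd k) η).trans ?_
      have hg : η * δ i' = η₀ * γ j' := by rw [hηdef, hη₁]; group
      have : U η (U (δ i') φ) = U (η₀ * γ j') φ := by rw [← hUmul, hg]
      rw [this]
      exact mul_le_mul_of_nonneg_left hkey hρ0
    have e2 : ‖U η q - q‖ ≤ (∑ k, |d k|) * (ρ * α) := by
      have hsplit : U η q - q = ∑ k, d k • (U η (U (δ k) φ) - U (δ k) φ) := by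
        rw [hq, map_sum]
        simp [smul_sub, Finset.sum_sub_distrib]
      rw [hsplit]
      refine (norm_sum_le _ _).trans ?_
      rw [Finset.sum_mul]
      refine Finset.sum_le_sum fun k _ => ?_
      rw [norm_smul, Real.norm_eq_abs]
      exact mul_le_mul_of_nonneg_left (e1 k) (abs_nonneg _)
    have e3 : ‖U η₁ p - q‖ = ‖U η₀ p - U η q‖ := by
      have h4 : U η (U η₁ p - q) = U η₀ p - U η q := by
        rw [map_sub, ← hUmul]
        congr 2
        rw [hηdef]; group
      rw [← h4, (U η).norm_map]
    have e4 : ‖U η₀ p - U η q‖ ≤ ‖U η₀ p - q‖ + ‖U η q - q‖ := by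
      have := norm_add_le (U η₀ p - q) (q - U η q)
      rw [norm_sub_rev q (U η q)] at this
      simpa using this
    have : (∑ k, |d k|) * (ρ * α) = α * ρ * ∑ k, |d k| := by ring
    linarith [e4, e3, e2, this]
  -- conclude via sInf
  have hmem : ‖U η₁ p - q‖ ∈
      ((fun η => ‖U η p - q‖) '' {η : G | ∃ i j, η = δ i * (γ j)⁻¹}) :=
    ⟨η₁, ⟨i', j', rfl⟩, rfl⟩
  have hbdd : BddBelow ((fun η => ‖U η p - q‖) '' {η : G | ∃ i j, η = δ i * (γ j)⁻¹}) := by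
    refine ⟨0, ?_⟩
    rintro x ⟨η, -, rfl⟩
    exact norm_nonneg _
  have hle := csInf_le hbdd hmem
  rcases le_total (∑ k, |c k|) (∑ k, |d k|) with hmn | hmn
  · rw [min_eq_left hmn]; linarith
  · rw [min_eq_right hmn]; linarith
end

section
/- Let K ≥ 1 and let w_1, …, w_{2K} ∈ H be unit vectors with ⟨w_i, w_j⟩ ≥ 0 for all i, j ∈ {1,…,2K}. Suppose the family (w_1, …, w_{2K}) is (ε, α)-robustly linearly independent for some ε > 0 and some α with 0 ≤ α < √2. If c, d ∈ ℝ^K have strictly positive entries and ‖Σ_{i=1}^K c_i w_i − Σ_{i=1}^K d_i w_{K+i}‖ < ε · √(‖c‖₂² + ‖d‖₂²), then there exist i, j ∈ {1, …, K} with ‖w_i − w_{K+j}‖ ≤ α. -/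
lemma sum_split_aux {M : Type*} [AddCommMonoid M] (K : ℕ) (f : Fin (2*K) → M) :
    ∑ i, f i = (∑ i : Fin K, f ⟨i.1, by omega⟩) + ∑ i : Fin K, f ⟨K + i.1, by omega⟩ := by
  have h2 : K + K = 2 * K := (two_mul K).symm
  rw [← Equiv.sum_comp (finCongr h2) f, Fin.sum_univ_add]
  rfl


/-- for a `(ε, α)`-RLI family of nonnegatively correlated unit
vectors with `α < √2`, a small difference of positive combinations of the two
halves forces two close vectors, one from each half. -/
theorem stmt5 {H : Type*} [NormedAddCommGroup H] [InnerProductSpace ℝ H]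
    (K : ℕ) (hK : 1 ≤ K) (w : Fin (2 * K) → H)
    (hw : ∀ i, ‖w i‖ = 1)
    (hpos : ∀ i j, 0 ≤ (inner ℝ (w i) (w j) : ℝ))
    (ε α : ℝ) (hε : 0 < ε) (hα0 : 0 ≤ α) (hα : α < Real.sqrt 2)
    (hRLI : IsRLI w ε α)
    (c d : Fin K → ℝ) (hc : ∀ i, 0 < c i) (hd : ∀ i, 0 < d i)
    (h : ‖(∑ i : Fin K, c i • w ⟨i.1, by have := i.2; omega⟩)
          - ∑ i : Fin K, d i • w ⟨K + i.1, by have := i.2; omega⟩‖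
        < ε * Real.sqrt (∑ i, c i ^ 2 + ∑ i, d i ^ 2)) :
    ∃ i j : Fin K,
      ‖w ⟨i.1, by have := i.2; omega⟩ - w ⟨K + j.1, by have := j.2; omega⟩‖ ≤ α := by
    classical
  set a : Fin (2*K) → ℝ := fun i =>
    if h : (i : ℕ) < K then c ⟨i, h⟩ else -d ⟨(i : ℕ) - K, by have := i.2; omega⟩ with ha
  have h1 : ∀ i : Fin K, a ⟨i.1, by omega⟩ = c i := by
    intro i
    simp only [ha]
    rw [dif_pos (show ((⟨i.1, by omega⟩ : Fin (2*K)) : ℕ) < K from i.2)]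
  have h2 : ∀ i : Fin K, a ⟨K + i.1, by omega⟩ = -d i := by
    intro i
    simp only [ha]
    rw [dif_neg (show ¬ ((⟨K + i.1, by omega⟩ : Fin (2*K)) : ℕ) < K by simp)]
    have : (⟨((⟨K + i.1, by omega⟩ : Fin (2*K)) : ℕ) - K, by omega⟩ : Fin K) = i :=
      Fin.ext (by simp)
    rw [this]
  have hsum : ∑ i, a i • w i
      = (∑ i : Fin K, c i • w ⟨i.1, by omega⟩) - ∑ i : Fin K, d i • w ⟨K + i.1, by omega⟩ := by
    rw [sum_split_aux K (fun i => a i • w i), sub_eq_add_neg, ← Finset.sum_neg_distrib]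
    congr 1
    · exact Finset.sum_congr rfl fun i _ => by rw [h1]
    · exact Finset.sum_congr rfl fun i _ => by rw [h2, neg_smul]
  have hsq : ∑ i, a i ^ 2 = ∑ i, c i ^ 2 + ∑ i, d i ^ 2 := by
    rw [sum_split_aux K (fun i => a i ^ 2)]
    congr 1
    · exact Finset.sum_congr rfl fun i _ => by rw [h1]
    · exact Finset.sum_congr rfl fun i _ => by rw [h2]; ring
  obtain ⟨i, j, hi, hj, hnorm⟩ := hRLI a (by rw [hsum, hsq]; exact h)
  have hu : ∀ i : Fin (2*K), ‖a i • w i‖⁻¹ • (a i • w i)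
      = if (i:ℕ) < K then w i else -w i := by
    intro i
    rw [norm_smul, hw, mul_one, Real.norm_eq_abs, smul_smul]
    by_cases hik : (i:ℕ) < K
    · rw [if_pos hik]
      have hpos' : 0 < a i := by
        simp only [ha]; rw [dif_pos hik]; exact hc _
      rw [abs_of_pos hpos', inv_mul_cancel₀ hpos'.ne', one_smul]
    · rw [if_neg hik]
      have hneg : a i < 0 := by
        simp only [ha]; rw [dif_neg hik]; exact neg_lt_zero.2 (hd _)
      have : |a i|⁻¹ * a i = -1 := by
        rw [abs_of_neg hneg, ← neg_inv, neg_mul, inv_mul_cancel₀ hneg.ne]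
      rw [this, neg_one_smul]
  rw [hu i, hu j] at hnorm
  have sqrt2le : ∀ u v : H, ‖u‖ = 1 → ‖v‖ = 1 → 0 ≤ (inner ℝ u v : ℝ) →
      Real.sqrt 2 ≤ ‖u + v‖ := by
    intro u v hu1 hv1 hiv
    rw [← Real.sqrt_sq (norm_nonneg (u + v))]
    apply Real.sqrt_le_sqrt
    rw [norm_add_sq_real, hu1, hv1]
    nlinarith
  by_cases hik : (i:ℕ) < K <;> by_cases hjk : (j:ℕ) < K
  · exfalso
    rw [if_pos hik, if_pos hjk] at hnorm
    exact absurd (le_trans (sqrt2le _ _ (hw i) (hw j) (hpos i j)) hnorm) (not_le.2 hα)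
  · -- i first half, j second half : w i - w j
    rw [if_pos hik, if_neg hjk] at hnorm
    refine ⟨⟨i.1, hik⟩, ⟨j.1 - K, by have := j.2; omega⟩, ?_⟩
    have e1 : (⟨(⟨i.1, hik⟩ : Fin K).1, by omega⟩ : Fin (2*K)) = i := by
      ext; simp
    have e2 : (⟨K + (⟨j.1 - K, by have := j.2; omega⟩ : Fin K).1, by omega⟩ : Fin (2*K)) = j := by
      ext; simp; omega
    rw [e1, e2, sub_eq_add_neg]
    exact hnorm
  · rw [if_neg hik, if_pos hjk] at hnorm
    refine ⟨⟨j.1, hjk⟩, ⟨i.1 - K, by have := i.2; omega⟩, ?_⟩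
    have e1 : (⟨(⟨j.1, hjk⟩ : Fin K).1, by omega⟩ : Fin (2*K)) = j := by
      ext; simp
    have e2 : (⟨K + (⟨i.1 - K, by have := i.2; omega⟩ : Fin K).1, by omega⟩ : Fin (2*K)) = i := by
      ext; simp; omega
    rw [e1, e2, sub_eq_add_neg, add_comm]
    exact hnorm
  · exfalso
    rw [if_neg hik, if_neg hjk] at hnorm
    have : 0 ≤ (inner ℝ (-w i) (-w j) : ℝ) := by rw [inner_neg_neg]; exact hpos i j
    exact absurd (le_trans (sqrt2le _ _ (by rw [norm_neg]; exact hw i)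
      (by rw [norm_neg]; exact hw j) this) hnorm) (not_le.2 hα)
end

section
/- Suppose the group G is commutative. Then for every φ ∈ H and all η, γ, γ' ∈ G, ‖U(η)(U(γ')φ) − U(γ')φ‖ = ‖U(η)(U(γ)φ) − U(γ)φ‖, and both sides equal ‖U(η)φ − φ‖. Consequently, the transformation inconsistency of any parametric dictionary built from a commutative transformation group equals 1. -/
/-- for a commutative transformation group, a transformation acts
on all atoms identically in norm, and the transformation inconsistency of any
parametric dictionary equals 1. -/
theorem stmt6 {H G : Type*} [NormedAddCommGroup H] [InnerProductSpace ℝ H]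
    [CommGroup G] (U : G →* (H ≃ₗᵢ[ℝ] H)) (φ : H) :
    (∀ η γ γ' : G,
      ‖U η (U γ' φ) - U γ' φ‖ = ‖U η (U γ φ) - U γ φ‖ ∧
      ‖U η (U γ φ) - U γ φ‖ = ‖U η φ - φ‖) ∧
    (∀ Td : Set G, Td.Nonempty → (∃ η : G, η ≠ 1 ∧ U η φ ≠ φ) →
      sSup {r : ℝ | ∃ γ ∈ Td, ∃ γ' ∈ Td, ∃ η : G, η ≠ 1 ∧
        r = ‖U η (U γ' φ) - U γ' φ‖ / ‖U η (U γ φ) - U γ φ‖} = 1) := by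
  have key : ∀ η γ : G, ‖U η (U γ φ) - U γ φ‖ = ‖U η φ - φ‖ := by
    intro η γ
    have h1 : U η (U γ φ) = U γ (U η φ) := by
      have : U η * U γ = U γ * U η := by
        rw [← map_mul, ← map_mul, mul_comm]
      calc U η (U γ φ) = (U η * U γ) φ := rfl
        _ = (U γ * U η) φ := by rw [this]
        _ = U γ (U η φ) := rfl
    rw [h1, show U γ (U η φ) - U γ φ = U γ (U η φ - φ) by rw [map_sub],
      (U γ).norm_map]
  constructor
  · intro η γ γ'
    exact ⟨by rw [key, key], key η γ⟩
  · intro Td ⟨γ₀, hγ₀⟩ ⟨η₀, hη₀, hne⟩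
    set S := {r : ℝ | ∃ γ ∈ Td, ∃ γ' ∈ Td, ∃ η : G, η ≠ 1 ∧
        r = ‖U η (U γ' φ) - U γ' φ‖ / ‖U η (U γ φ) - U γ φ‖}
    have h1 : (1 : ℝ) ∈ S := by
      refine ⟨γ₀, hγ₀, γ₀, hγ₀, η₀, hη₀, ?_⟩
      rw [div_self]
      rw [key]
      simpa [sub_eq_zero] using hne
    have hub : ∀ r ∈ S, r ≤ 1 := by
      rintro r ⟨γ, _, γ', _, η, _, rfl⟩
      rw [key, key]
      exact div_self_le_one _
    exact le_antisymm (csSup_le ⟨1, h1⟩ hub) (le_csSup ⟨1, hub⟩ h1)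
end

section
/- Let K ≥ 1 and let a ∈ ℝ^K with ‖a‖₂ = 1. Then there exists an index i ∈ {1, …, K} such that |a_i| ≥ 2^{i−1} · √(3/(4^K − 1)). -/
/-- every unit vector `a ∈ ℝ^K` has a coordinate `i` (0-indexed)
with `|a_i| ≥ 2^i · √(3/(4^K − 1))`. -/
theorem stmt11 (K : ℕ) (hK : 1 ≤ K) (a : Fin K → ℝ)
    (ha : Real.sqrt (∑ i, a i ^ 2) = 1) :
    ∃ i : Fin K, 2 ^ (i : ℕ) * Real.sqrt (3 / (4 ^ K - 1)) ≤ |a i| := by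
  have hsum : (∑ i, a i ^ 2) = 1 := by
    have h0 : (0:ℝ) ≤ ∑ i, a i ^ 2 := Finset.sum_nonneg fun i _ => sq_nonneg _
    nlinarith [Real.sq_sqrt h0, ha]
  by_contra h
  push_neg at h
  set c : ℝ := 3 / (4 ^ K - 1) with hc
  have h4 : (1:ℝ) < 4 ^ K := by
    calc (1:ℝ) < 4 := by norm_num
    _ = 4 ^ 1 := (pow_one _).symm
    _ ≤ 4 ^ K := pow_le_pow_right₀ (by norm_num) hK
  have hcpos : 0 < c := div_pos (by norm_num) (by linarith)
  have key : ∀ i : Fin K, a i ^ 2 < 4 ^ (i:ℕ) * c := by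
    intro i
    have hi := h i
    have h1 : a i ^ 2 = |a i| ^ 2 := (sq_abs _).symm
    have h2 : (2 ^ (i:ℕ) * Real.sqrt c) ^ 2 = 4 ^ (i:ℕ) * c := by
      rw [mul_pow, Real.sq_sqrt hcpos.le, ← pow_mul, mul_comm (i:ℕ) 2, pow_mul]
      norm_num
    rw [h1, ← h2]
    exact pow_lt_pow_left₀ hi (abs_nonneg _) (by norm_num) |>.trans_le le_rfl
  have hne : (Finset.univ : Finset (Fin K)).Nonempty := by
    haveI : NeZero K := ⟨by omega⟩
    exact Finset.univ_nonempty
  have hlt : (∑ i, a i ^ 2) < ∑ i : Fin K, 4 ^ (i:ℕ) * c :=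
    Finset.sum_lt_sum_of_nonempty hne fun i _ => key i
  have hgeo : (∑ i : Fin K, (4:ℝ) ^ (i:ℕ)) = (4 ^ K - 1) / 3 := by
    rw [Fin.sum_univ_eq_sum_range]
    rw [geom_sum_eq (by norm_num : (4:ℝ) ≠ 1)]
    ring
  have : (∑ i : Fin K, (4:ℝ) ^ (i:ℕ) * c) = 1 := by
    rw [← Finset.sum_mul, hgeo, hc]
    rw [div_mul_div_comm]
    rw [mul_comm (3:ℝ), ← div_mul_div_comm, div_self (by linarith : (4:ℝ)^K - 1 ≠ 0)]
    norm_num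
  rw [this, hsum] at hlt
  exact lt_irrefl _ hlt
end

section
/- Let K ≥ 1, set Y = √(3/(4^K − 1)), and let ε satisfy 0 < ε < Y. Let τ_1 < τ_2 < … < τ_K be real numbers and let a ∈ ℝ^K with ‖a‖₂ = 1 and ‖Σ_{i=1}^K a_i v_{τ_i}‖₂ < ε. Let i* be the smallest index with |a_{i*}| ≥ 2^{i*−1} Y (such an index exists). Then there exists an index j ∈ {1, …, K} with τ_{i*} < τ_j ≤ τ_{i*} + 1 and a_j · a_{i*} < 0. -/
/-- The box function: indicator of the interval `[τ, τ + 1]`. -/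
noncomputable def boxFn (τ : ℝ) : ℝ → ℝ :=
  Set.indicator (Set.Icc τ (τ + 1)) fun _ => 1

/-- The `L²` norm of a real function on `ℝ` (with respect to Lebesgue measure). -/
noncomputable def L2norm (f : ℝ → ℝ) : ℝ := Real.sqrt (∫ t, f t ^ 2)

/-- if a unit-coefficient combination of box functions has small
`L²` norm, there is a box starting in `(τ_{i*}, τ_{i*} + 1]` whose coefficient
has a sign opposite to that of `a_{i*}`. Indices are 0-based, so the paper's
`2^{i−1}` bound reads `2^i` here. -/
theorem stmt12 (K : ℕ) (hK : 1 ≤ K) (Y ε : ℝ)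
    (hY : Y = Real.sqrt (3 / (4 ^ K - 1)))
    (hε : 0 < ε) (hεY : ε < Y)
    (τ : Fin K → ℝ) (hτ : StrictMono τ)
    (a : Fin K → ℝ) (ha : Real.sqrt (∑ i, a i ^ 2) = 1)
    (hsmall : L2norm (fun t => ∑ i, a i * boxFn (τ i) t) < ε)
    (istar : Fin K) (histar : 2 ^ (istar : ℕ) * Y ≤ |a istar|)
    (hmin : ∀ i : Fin K, i < istar → |a i| < 2 ^ (i : ℕ) * Y) :
    ∃ j : Fin K, τ istar < τ j ∧ τ j ≤ τ istar + 1 ∧ a j * a istar < 0 := by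
  by_contra hcon
  push_neg at hcon
  set f : ℝ → ℝ := fun t => ∑ i, a i * boxFn (τ i) t with hf
  have hY0 : 0 < Y := lt_trans hε hεY
  have hbox01 : ∀ τ0 t : ℝ, boxFn τ0 t = 0 ∨ boxFn τ0 t = 1 := by
    intro τ0 t
    by_cases h : t ∈ Set.Icc τ0 (τ0 + 1)
    · right; simp [boxFn, Set.indicator_of_mem h]
    · left; simp [boxFn, Set.indicator_of_notMem h]
  set s : ℝ := if 0 ≤ a istar then 1 else -1 with hsdef
  have hs1 : s * a istar = |a istar| := by
    rcases le_or_gt 0 (a istar) with h | h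
    · simp [hsdef, h, abs_of_nonneg h]
    · simp [hsdef, not_le.mpr h, abs_of_neg h]
  have hss : s * s = 1 := by
    rcases le_or_gt 0 (a istar) with h | h
    · simp [hsdef, h]
    · simp [hsdef, not_le.mpr h]
  have habs_s : |s| = 1 := by
    rcases le_or_gt 0 (a istar) with h | h
    · simp [hsdef, h]
    · simp [hsdef, not_le.mpr h]
  -- pointwise lower bound on the interval
  have hpt : ∀ t ∈ Set.Ioc (τ istar) (τ istar + 1),
      (fun _ : ℝ => Y ^ 2) t ≤ (fun t => f t ^ 2) t := by
    intro t ht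
    have hterm : ∀ i : Fin K,
        (if i = istar then |a istar| else 0)
          + (if (i : ℕ) < (istar : ℕ) then -((2:ℝ) ^ (i : ℕ) * Y) else 0)
          ≤ s * (a i * boxFn (τ i) t) := by
      intro i
      rcases lt_trichotomy i istar with hlt | heq | hgt
      · rw [if_neg (ne_of_lt hlt), if_pos (show (i:ℕ) < (istar:ℕ) from hlt)]
        have h1 : |s * (a i * boxFn (τ i) t)| ≤ |a i| := by
          rcases hbox01 (τ i) t with h | h <;>
            simp [h, abs_mul, habs_s, abs_nonneg]
        have h2 := hmin i hlt
        have h3 := neg_abs_le (s * (a i * boxFn (τ i) t))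
        linarith [abs_nonneg (a i)]
      · subst heq
        have hbox : boxFn (τ i) t = 1 :=
          Set.indicator_of_mem (Set.Ioc_subset_Icc_self ht) _
        rw [if_pos rfl, if_neg (lt_irrefl _), hbox, mul_one, hs1]
        simp
      · rw [if_neg (ne_of_gt hgt), if_neg (by omega : ¬ (i:ℕ) < (istar:ℕ))]
        by_cases hm : t ∈ Set.Icc (τ i) (τ i + 1)
        · have hbox : boxFn (τ i) t = 1 := Set.indicator_of_mem hm _
          rw [hbox, mul_one]
          have h1 : τ istar < τ i := hτ hgt
          have h2 : τ i ≤ τ istar + 1 := hm.1.trans ht.2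
          have h3 := hcon i h1 h2
          have hapos : 0 < |a istar| :=
            lt_of_lt_of_le (by positivity) histar
          have key : (s * a i) * (s * a istar) = a i * a istar := by
            rw [mul_mul_mul_comm, hss, one_mul]
          rw [hs1] at key
          nlinarith
        · have hbox : boxFn (τ i) t = 0 := Set.indicator_of_notMem hm _
          rw [hbox, mul_zero, mul_zero]
          simp
    have hsum : (∑ i : Fin K, ((if i = istar then |a istar| else 0)
          + (if (i : ℕ) < (istar : ℕ) then -((2:ℝ) ^ (i : ℕ) * Y) else 0)))
        ≤ s * f t := by
      rw [hf, Finset.mul_sum]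
      exact Finset.sum_le_sum fun i _ => hterm i
    rw [Finset.sum_add_distrib] at hsum
    have hsum1 : (∑ i : Fin K, if i = istar then |a istar| else 0) = |a istar| := by
      simp
    have hsum2 : (∑ i : Fin K, if (i : ℕ) < (istar : ℕ) then -((2:ℝ) ^ (i : ℕ) * Y) else 0)
        = -((2 ^ (istar : ℕ) - 1) * Y) := by
      rw [Fin.sum_univ_eq_sum_range (fun j => if j < (istar:ℕ) then -((2:ℝ) ^ j * Y) else 0) K]
      rw [← Finset.sum_subset (Finset.range_subset_range.mpr istar.isLt.le)
        (fun x _ hnx => if_neg (by simpa using hnx))]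
      rw [Finset.sum_congr rfl (fun x hx => if_pos (Finset.mem_range.mp hx))]
      have hg : ∑ j ∈ Finset.range (istar:ℕ), (2:ℝ) ^ j = 2 ^ (istar:ℕ) - 1 := by
        rw [geom_sum_eq (by norm_num : (2:ℝ) ≠ 1)]
        norm_num
      calc ∑ j ∈ Finset.range (istar:ℕ), -((2:ℝ) ^ j * Y)
          = -((∑ j ∈ Finset.range (istar:ℕ), (2:ℝ) ^ j) * Y) := by
            rw [Finset.sum_mul, Finset.sum_neg_distrib]
        _ = -((2 ^ (istar:ℕ) - 1) * Y) := by rw [hg]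
    rw [hsum1, hsum2] at hsum
    have hYle : Y ≤ s * f t := by linarith
    have habs : Y ≤ |f t| := by
      have : s * f t ≤ |s * f t| := le_abs_self _
      rw [abs_mul, habs_s, one_mul] at this
      linarith
    have : Y ^ 2 ≤ |f t| ^ 2 := pow_le_pow_left₀ hY0.le habs 2
    simpa [sq_abs] using this
  -- measurability and integrability
  have hmf : Measurable f := by
    apply Finset.measurable_sum
    intro i _
    exact (measurable_const.indicator measurableSet_Icc).const_mul (a i)
  have hK0 : 0 < K := hK
  set A := τ ⟨0, hK0⟩ with hA
  set B := τ ⟨K - 1, by omega⟩ + 1 with hB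
  set C := (∑ i, |a i|) ^ 2 with hC
  have hfb : ∀ t, (fun t => f t ^ 2) t ≤ Set.indicator (Set.Icc A B) (fun _ => C) t := by
    intro t
    by_cases hm : t ∈ Set.Icc A B
    · rw [Set.indicator_of_mem hm]
      have h1 : |f t| ≤ ∑ i, |a i| := by
        refine (Finset.abs_sum_le_sum_abs _ _).trans (Finset.sum_le_sum fun i _ => ?_)
        rw [abs_mul]
        rcases hbox01 (τ i) t with h | h <;> simp [h, abs_nonneg]
      calc f t ^ 2 = |f t| ^ 2 := (sq_abs _).symm
        _ ≤ C := pow_le_pow_left₀ (abs_nonneg _) h1 2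
    · rw [Set.indicator_of_notMem hm]
      have hzero : f t = 0 := by
        apply Finset.sum_eq_zero
        intro i _
        have hbox : boxFn (τ i) t = 0 := by
          apply Set.indicator_of_notMem
          intro hmem
          apply hm
          constructor
          · refine le_trans ?_ hmem.1
            exact hτ.monotone (by simp [Fin.le_def])
          · refine le_trans hmem.2 ?_
            have : τ i ≤ τ ⟨K - 1, by omega⟩ := hτ.monotone (by simp [Fin.le_def]; omega)
            rw [hB]; linarith
        rw [hbox, mul_zero]
      simp [hzero]
  have hgint : MeasureTheory.Integrable (Set.indicator (Set.Icc A B) (fun _ => C)) := by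
    rw [MeasureTheory.integrable_indicator_iff measurableSet_Icc]
    exact (MeasureTheory.integrableOn_const_iff).mpr (Or.inr measure_Icc_lt_top)
  have hint : MeasureTheory.Integrable (fun t => f t ^ 2) := by
    refine hgint.mono' ((hmf.pow_const 2).aestronglyMeasurable) (Filter.Eventually.of_forall fun t => ?_)
    rw [Real.norm_eq_abs, abs_of_nonneg (sq_nonneg _)]
    exact hfb t
  -- integral bounds
  have hvol : MeasureTheory.volume (Set.Ioc (τ istar) (τ istar + 1)) = 1 := by
    rw [Real.volume_Ioc]
    norm_num
  have h1 : Y ^ 2 ≤ ∫ t in Set.Ioc (τ istar) (τ istar + 1), f t ^ 2 := by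
    have hmono := MeasureTheory.setIntegral_mono_on
      ((MeasureTheory.integrableOn_const_iff).mpr (Or.inr (by rw [hvol]; norm_num)))
      hint.integrableOn measurableSet_Ioc hpt
    rwa [MeasureTheory.setIntegral_const, MeasureTheory.measureReal_def, hvol, ENNReal.toReal_one, one_smul] at hmono
  have h2 : (∫ t in Set.Ioc (τ istar) (τ istar + 1), f t ^ 2) ≤ ∫ t, f t ^ 2 :=
    MeasureTheory.setIntegral_le_integral hint
      (Filter.Eventually.of_forall fun t => sq_nonneg _)
  have h3 : (∫ t, f t ^ 2) < ε ^ 2 := by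
    rw [L2norm] at hsmall
    exact (Real.sqrt_lt' hε).mp hsmall
  have h4 : ε ^ 2 < Y ^ 2 := pow_lt_pow_left₀ hεY hε.le (by norm_num)
  linarith
end

section
/- Let K ≥ 1, set Y = √(3/(4^K − 1)), and let ε satisfy 0 < ε < Y. Let τ_1 < τ_2 < … < τ_K be real numbers and let a ∈ ℝ^K with ‖a‖₂ = 1 and ‖Σ_{i=1}^K a_i v_{τ_i}‖₂ < ε. Let i* be the smallest index with |a_{i*}| ≥ 2^{i*−1} Y, and let j* be the smallest index larger than i* with a_{j*} · a_{i*} < 0 (such indices exist). Then for every t with τ_{i*} ≤ t < τ_{j*}, one has |Σ_{i=1}^K a_i v_{τ_i}(t)| ≥ Y. -/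
lemma boxFn_cases (τ t : ℝ) : boxFn τ t = 0 ∨ boxFn τ t = 1 := by
  unfold boxFn Set.indicator
  split <;> simp

lemma boxFn_of_mem {τ t : ℝ} (h : t ∈ Set.Icc τ (τ + 1)) : boxFn τ t = 1 :=
  Set.indicator_of_mem h _

lemma boxFn_of_not_mem {τ t : ℝ} (h : t ∉ Set.Icc τ (τ + 1)) : boxFn τ t = 0 :=
  Set.indicator_of_notMem h _

lemma boxFn_eq_one_iff {τ t : ℝ} : boxFn τ t = 1 ↔ t ∈ Set.Icc τ (τ + 1) := by
  constructor
  · intro h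
    by_contra hc
    rw [boxFn_of_not_mem hc] at h
    norm_num at h
  · exact boxFn_of_mem

lemma measurable_boxFn (τ : ℝ) : Measurable (boxFn τ) :=
  measurable_const.indicator measurableSet_Icc

lemma geom_two_sum (m : ℕ) : ∑ j ∈ Finset.range m, (2:ℝ)^j = 2^m - 1 := by
  induction m with
  | zero => simp
  | succ n ih => rw [Finset.sum_range_succ, ih]; ring

/-- on the interval `[τ_{i*}, τ_{j*})` the combination of box
functions has pointwise magnitude at least `Y`. Indices are 0-based, so the
paper's `2^{i−1}` bound reads `2^i` here. -/
theorem stmt13 (K : ℕ) (hK : 1 ≤ K) (Y ε : ℝ)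
    (hY : Y = Real.sqrt (3 / (4 ^ K - 1)))
    (hε : 0 < ε) (hεY : ε < Y)
    (τ : Fin K → ℝ) (hτ : StrictMono τ)
    (a : Fin K → ℝ) (ha : Real.sqrt (∑ i, a i ^ 2) = 1)
    (hsmall : L2norm (fun t => ∑ i, a i * boxFn (τ i) t) < ε)
    (istar : Fin K) (histar : 2 ^ (istar : ℕ) * Y ≤ |a istar|)
    (hmin : ∀ i : Fin K, i < istar → |a i| < 2 ^ (i : ℕ) * Y)
    (jstar : Fin K) (hij : istar < jstar) (hjstar : a jstar * a istar < 0)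
    (hjmin : ∀ j : Fin K, istar < j → j < jstar → ¬ a j * a istar < 0) :
    ∀ t : ℝ, τ istar ≤ t → t < τ jstar → Y ≤ |∑ i, a i * boxFn (τ i) t| := by
  have hYpos : 0 < Y := lt_trans hε hεY
  set F : ℝ → ℝ := fun t => ∑ i, a i * boxFn (τ i) t with hFdef
  -- sign of a istar
  have habs_pos : 0 < |a istar| :=
    lt_of_lt_of_le (by positivity) histar
  set σ : ℝ := if 0 ≤ a istar then 1 else -1 with hσdef
  have hσa : σ * a istar = |a istar| := by
    rw [hσdef]
    split
    · rw [abs_of_nonneg ‹_›]; ring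
    · rw [abs_of_neg (by linarith [not_le.mp ‹_›])]; ring
  have hσabs : |σ| = 1 := by
    rw [hσdef]; split <;> simp
  -- Key pointwise lemma on [τ istar, τ istar + 1] ∩ (-∞, τ jstar)
  have key : ∀ t : ℝ, τ istar ≤ t → t ≤ τ istar + 1 → t < τ jstar → Y ≤ |F t| := by
    intro t ht1 ht2 ht3
    have hσF : σ * F t = ∑ i, σ * (a i * boxFn (τ i) t) := by
      rw [hFdef]; exact Finset.mul_sum _ _ _
    -- lower bound each term
    have hterm : ∀ i ∈ Finset.univ,
        ((if i = istar then |a istar| else 0)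
          - (if i < istar then 2 ^ (i : ℕ) * Y else 0))
        ≤ σ * (a i * boxFn (τ i) t) := by
      intro i _
      rcases lt_trichotomy i istar with hlt | heq | hgt
      · rw [if_neg (ne_of_lt hlt), if_pos hlt]
        rcases boxFn_cases (τ i) t with hb | hb
        · rw [hb]
          have : (0:ℝ) < 2 ^ (i : ℕ) * Y := by positivity
          nlinarith
        · rw [hb]
          have h1 : |a i| < 2 ^ (i : ℕ) * Y := hmin i hlt
          have h2 : -|a i| ≤ σ * a i := by
            rcases abs_cases σ with ⟨h, _⟩ | ⟨h, _⟩ <;> nlinarith [neg_abs_le (a i), le_abs_self (a i)]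
          nlinarith
      · subst heq
        rw [if_pos rfl, if_neg (lt_irrefl _)]
        have hb : boxFn (τ i) t = 1 := boxFn_of_mem ⟨ht1, ht2⟩
        rw [hb, sub_zero, mul_one, hσa]
      · rw [if_neg (ne_of_gt hgt), if_neg (not_lt.mpr (le_of_lt hgt)), sub_zero]
        rcases boxFn_cases (τ i) t with hb | hb
        · rw [hb]; simp
        · rw [hb, mul_one]
          have hmem : t ∈ Set.Icc (τ i) (τ i + 1) := boxFn_eq_one_iff.mp hb
          have hi_lt : i < jstar := by
            by_contra hc
            have : τ jstar ≤ τ i := hτ.monotone (not_lt.mp hc)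
            linarith [hmem.1]
          have hA : 0 ≤ a i * a istar := not_lt.mp (hjmin i hgt hi_lt)
          have hσ2 : σ * σ = 1 := by rw [hσdef]; split <;> norm_num
          have h5 : 0 ≤ (σ * a i) * (σ * a istar) := by
            calc (σ * a i) * (σ * a istar) = (σ * σ) * (a i * a istar) := by ring
            _ = a i * a istar := by rw [hσ2, one_mul]
            _ ≥ 0 := hA
          have h6 : 0 < σ * a istar := by rw [hσa]; exact habs_pos
          nlinarith
    have hsum_le : ∑ i, ((if i = istar then |a istar| else 0)
          - (if i < istar then 2 ^ (i : ℕ) * Y else 0))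
        ≤ σ * F t := by
      rw [hσF]; exact Finset.sum_le_sum hterm
    -- compute the lower-bound sum
    have hdelta : ∑ i : Fin K, (if i = istar then |a istar| else 0) = |a istar| := by
      rw [Finset.sum_ite_eq' Finset.univ istar (fun _ => |a istar|)]
      simp
    have hgeom : ∑ i : Fin K, (if i < istar then 2 ^ (i : ℕ) * Y else 0)
        = (2 ^ (istar : ℕ) - 1) * Y := by
      have h1 : ∀ i : Fin K, (if i < istar then 2 ^ (i : ℕ) * Y else 0)
          = (fun n : ℕ => if n < (istar : ℕ) then 2 ^ n * Y else 0) (i : ℕ) := by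
        intro i
        simp only [Fin.lt_def]
      calc ∑ i : Fin K, (if i < istar then 2 ^ (i : ℕ) * Y else 0)
          = ∑ i : Fin K, (fun n : ℕ => if n < (istar : ℕ) then 2 ^ n * Y else 0) (i : ℕ) :=
            Finset.sum_congr rfl (fun i _ => h1 i)
        _ = ∑ j ∈ Finset.range K, (if j < (istar : ℕ) then 2 ^ j * Y else 0) :=
            Fin.sum_univ_eq_sum_range (fun n => if n < (istar : ℕ) then 2 ^ n * Y else 0) K
        _ = ∑ j ∈ (Finset.range K).filter (fun j => j < (istar : ℕ)), 2 ^ j * Y := by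
            rw [Finset.sum_filter]
        _ = ∑ j ∈ Finset.range (istar : ℕ), 2 ^ j * Y := by
            congr 1
            ext j
            simp only [Finset.mem_filter, Finset.mem_range]
            constructor
            · rintro ⟨_, h⟩; exact h
            · intro h; exact ⟨lt_trans h istar.isLt, h⟩
        _ = (∑ j ∈ Finset.range (istar : ℕ), (2:ℝ) ^ j) * Y := by
            rw [Finset.sum_mul]
        _ = (2 ^ (istar : ℕ) - 1) * Y := by rw [geom_two_sum]
    have hlb : |a istar| - (2 ^ (istar : ℕ) - 1) * Y ≤ σ * F t := by
      calc |a istar| - (2 ^ (istar : ℕ) - 1) * Y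
          = ∑ i : Fin K, ((if i = istar then |a istar| else 0)
              - (if i < istar then 2 ^ (i : ℕ) * Y else 0)) := by
            rw [Finset.sum_sub_distrib, hdelta, hgeom]
        _ ≤ σ * F t := hsum_le
    have hY_le : Y ≤ σ * F t := by nlinarith
    calc Y ≤ σ * F t := hY_le
      _ ≤ |σ * F t| := le_abs_self _
      _ = |F t| := by rw [abs_mul, hσabs, one_mul]
  -- Show τ jstar ≤ τ istar + 1 using the smallness of the L² norm
  have hover : τ jstar ≤ τ istar + 1 := by
    by_contra hc
    push_neg at hc
    -- |F| ≥ Y on Icc (τ istar) (τ istar + 1)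
    have hptw : ∀ t ∈ Set.Icc (τ istar) (τ istar + 1), Y ≤ |F t| := by
      intro t ht
      exact key t ht.1 ht.2 (lt_of_le_of_lt ht.2 hc)
    -- measurability and integrability
    have hFmeas : Measurable F := by
      apply Finset.measurable_sum
      intro i _
      exact (measurable_boxFn (τ i)).const_mul (a i)
    have hF2meas : Measurable (fun t => F t ^ 2) := hFmeas.pow_const 2
    -- F is supported in a compact interval and bounded
    have hzeroK : 0 < K := hK
    set lo : ℝ := τ ⟨0, hzeroK⟩ with hlo
    set hi : ℝ := τ ⟨K - 1, by omega⟩ + 1 with hhi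
    set M : ℝ := (∑ i, |a i|) ^ 2 with hM
    have hbound : ∀ t, F t ^ 2 ≤ Set.indicator (Set.Icc lo hi) (fun _ => M) t := by
      intro t
      by_cases hmem : t ∈ Set.Icc lo hi
      · rw [Set.indicator_of_mem hmem]
        have h1 : |F t| ≤ ∑ i, |a i| := by
          rw [hFdef]
          calc |∑ i, a i * boxFn (τ i) t| ≤ ∑ i, |a i * boxFn (τ i) t| :=
                Finset.abs_sum_le_sum_abs _ _
            _ ≤ ∑ i, |a i| := by
                apply Finset.sum_le_sum
                intro i _
                rw [abs_mul]
                rcases boxFn_cases (τ i) t with hb | hb <;> rw [hb] <;> simp [abs_nonneg]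
        have h2 : F t ^ 2 = |F t| ^ 2 := (sq_abs _).symm
        rw [h2, hM]
        exact pow_le_pow_left₀ (abs_nonneg _) h1 2
      · rw [Set.indicator_of_notMem hmem]
        have hFzero : F t = 0 := by
          rw [hFdef]
          apply Finset.sum_eq_zero
          intro i _
          have : t ∉ Set.Icc (τ i) (τ i + 1) := by
            intro hin
            apply hmem
            constructor
            · calc lo ≤ τ i := hτ.monotone (by rw [Fin.le_def]; simp)
                _ ≤ t := hin.1
            · calc t ≤ τ i + 1 := hin.2
                _ ≤ hi := by
                    rw [hhi]
                    have : τ i ≤ τ ⟨K - 1, by omega⟩ :=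
                      hτ.monotone (by rw [Fin.le_def]; simp; omega)
                    linarith
          rw [boxFn_of_not_mem this, mul_zero]
        rw [hFzero]
        norm_num
    have hindInt : MeasureTheory.Integrable
        (Set.indicator (Set.Icc lo hi) (fun _ => M)) := by
      rw [MeasureTheory.integrable_indicator_iff measurableSet_Icc]
      apply (MeasureTheory.integrableOn_const_iff (C := M)).mpr
      right
      rw [Real.volume_Icc]
      exact ENNReal.ofReal_lt_top
    have hF2int : MeasureTheory.Integrable (fun t => F t ^ 2) := by
      apply MeasureTheory.Integrable.mono' hindInt hF2meas.aestronglyMeasurable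
      filter_upwards with t
      rw [Real.norm_eq_abs, abs_of_nonneg (sq_nonneg (F t))]
      exact hbound t
    -- lower bound the integral
    have hsetInt : Y ^ 2 ≤ ∫ t in Set.Icc (τ istar) (τ istar + 1), F t ^ 2 := by
      have hconst : ∫ t in Set.Icc (τ istar) (τ istar + 1), Y ^ 2
          = Y ^ 2 := by
        rw [MeasureTheory.setIntegral_const, Real.volume_real_Icc]
        simp
      rw [← hconst]
      apply MeasureTheory.setIntegral_mono_on
      · apply (MeasureTheory.integrableOn_const_iff (C := Y ^ 2)).mpr
        right
        rw [Real.volume_Icc]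
        exact ENNReal.ofReal_lt_top
      · exact hF2int.integrableOn
      · exact measurableSet_Icc
      · intro t ht
        have h := hptw t ht
        calc Y ^ 2 ≤ |F t| ^ 2 := by
              exact pow_le_pow_left₀ hYpos.le h 2
          _ = F t ^ 2 := sq_abs _
    have htotal : Y ^ 2 ≤ ∫ t, F t ^ 2 := by
      calc Y ^ 2 ≤ ∫ t in Set.Icc (τ istar) (τ istar + 1), F t ^ 2 := hsetInt
        _ ≤ ∫ t, F t ^ 2 := by
            apply MeasureTheory.setIntegral_le_integral hF2int
            filter_upwards with t
            exact sq_nonneg _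
    have : Y ≤ L2norm F := by
      unfold L2norm
      calc Y = Real.sqrt (Y ^ 2) := (Real.sqrt_sq hYpos.le).symm
        _ ≤ Real.sqrt (∫ t, F t ^ 2) := Real.sqrt_le_sqrt htotal
    rw [hFdef] at this
    linarith [hsmall]
  -- conclude
  intro t ht1 ht2
  exact key t ht1 (le_trans ht2.le hover) ht2
end

section
/- Assume: (i) ‖φ‖ = 1; (ii) ⟨φ_γ, φ_δ⟩ ≥ 0 for all γ, δ ∈ 𝒯_d; (iii) all coefficients c_i and d_i are strictly positive; (iv) there exists η₀ ∈ G with ‖U(η₀)p − q‖ ≤ ‖U(η)p − q‖ for every η ∈ G, and moreover η₀ ∘ γ_i ∈ 𝒯_d and η₀⁻¹ ∘ δ_i ∈ 𝒯_d for all i; (v) ‖U(η₀)p − q‖ < ε · √(‖c‖₂² + ‖d‖₂²) for some ε > 0; (vi) for some α with 0 ≤ α < √2, every family (φ_{χ_1}, …, φ_{χ_{2K}}) with χ_1, …, χ_{2K} ∈ 𝒯_d is (ε, α)-robustly linearly independent; (vii) there is ρ ≥ 0 such that for every η ∈ G and every η' ∈ 𝒯_d with η' ∉ η ∘ S_φ,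 there exists π ∈ S_φ such that for all γ ∈ 𝒯_d, ‖U(η ∘ π ∘ η'⁻¹)φ_γ − φ_γ‖ ≤ ρ · ‖U(η)φ − U(η')φ‖ (the symmetry-aware transformation inconsistency of the dictionary is at most ρ). Then inf_{η ∈ 𝒯_a} ‖U(η)p − q‖ − ‖U(η₀)p − q‖ ≤ α ρ · min(‖c‖₁, ‖d‖₁), where ‖c‖₁ = Σ_{i=1}^K |c_i| and ‖c‖₂ is the Euclidean norm. -/
lemma aux_sqrt2 {H : Type*} [NormedAddCommGroup H] [InnerProductSpace ℝ H] {w₁ w₂ : H}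
    (h1 : ‖w₁‖ = 1) (h2 : ‖w₂‖ = 1) (hip : 0 ≤ (inner ℝ w₁ w₂ : ℝ)) :
    Real.sqrt 2 ≤ ‖w₁ + w₂‖ := by
  have hsq : ‖w₁ + w₂‖ ^ 2 = ‖w₁‖ ^ 2 + 2 * (inner ℝ w₁ w₂ : ℝ) + ‖w₂‖ ^ 2 :=
    norm_add_sq_real w₁ w₂
  nlinarith [Real.sq_sqrt (by norm_num : (0:ℝ) ≤ 2), Real.sqrt_nonneg 2,
    norm_nonneg (w₁ + w₂)]

lemma aux_upos {H : Type*} [NormedAddCommGroup H] [NormedSpace ℝ H] {a : ℝ} (ha : 0 < a)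
    {w : H} (hw : ‖w‖ = 1) : ‖a • w‖⁻¹ • (a • w) = w := by
  rw [norm_smul, hw, mul_one, smul_smul, Real.norm_eq_abs, abs_of_pos ha,
    inv_mul_cancel₀ ha.ne', one_smul]

lemma aux_uneg {H : Type*} [NormedAddCommGroup H] [NormedSpace ℝ H] {a : ℝ} (ha : a < 0)
    {w : H} (hw : ‖w‖ = 1) : ‖a • w‖⁻¹ • (a • w) = -w := by
  rw [norm_smul, hw, mul_one, smul_smul, Real.norm_eq_abs, abs_of_neg ha, ← neg_inv,
    neg_mul, inv_mul_cancel₀ ha.ne, neg_smul, one_smul]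

def fin2Equiv (K : ℕ) : Fin K ⊕ Fin K ≃ Fin (2 * K) :=
  finSumFinEquiv.trans (finCongr (two_mul K).symm)

lemma fin2Equiv_inl (K : ℕ) (k : Fin K) : ((fin2Equiv K (Sum.inl k)) : ℕ) = (k : ℕ) := by
  simp [fin2Equiv]

lemma fin2Equiv_inr (K : ℕ) (k : Fin K) : ((fin2Equiv K (Sum.inr k)) : ℕ) = K + (k : ℕ) := by
  simp [fin2Equiv, Nat.add_comm]

def glue {X : Type*} {K : ℕ} (f g : Fin K → X) : Fin (2 * K) → X :=
  fun i => if h : (i : ℕ) < K then f ⟨i, h⟩ else g ⟨(i : ℕ) - K, by have := i.isLt; omega⟩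

lemma glue_inl {X : Type*} {K : ℕ} (f g : Fin K → X) (k : Fin K) :
    glue f g (fin2Equiv K (Sum.inl k)) = f k := by
  have h := fin2Equiv_inl K k
  rw [glue, dif_pos (by rw [h]; exact k.isLt)]
  exact congrArg f (Fin.ext h)

lemma glue_inr {X : Type*} {K : ℕ} (f g : Fin K → X) (k : Fin K) :
    glue f g (fin2Equiv K (Sum.inr k)) = g k := by
  have h := fin2Equiv_inr K k
  rw [glue, dif_neg (by omega)]
  congr 1
  simp [Fin.ext_iff, h]

lemma sum_fin2 {M : Type*} [AddCommMonoid M] {K : ℕ} (F : Fin (2 * K) → M) :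
    ∑ i, F i = ∑ k : Fin K, F (fin2Equiv K (Sum.inl k)) + ∑ k : Fin K, F (fin2Equiv K (Sum.inr k)) := by
  rw [← Equiv.sum_comp (fin2Equiv K) F, Fintype.sum_sum_type]

/-- registration error bound for the modified algorithm in the
presence of symmetries of the generating function (nontrivial stabilizer
`S_φ = {π : U(π)φ = φ}`), with the symmetry-aware transformation inconsistency. -/
theorem stmt14 {H G : Type*} [NormedAddCommGroup H] [InnerProductSpace ℝ H]
    [Group G] (U : G →* (H ≃ₗᵢ[ℝ] H)) (φ : H) (Td : Set G)
    (hφ : ‖φ‖ = 1)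
    (hpos : ∀ γ ∈ Td, ∀ δ ∈ Td, 0 ≤ (inner ℝ (U γ φ) (U δ φ) : ℝ))
    (K : ℕ) (hK : 1 ≤ K)
    (γ δ : Fin K → G) (hγTd : ∀ i, γ i ∈ Td) (hδTd : ∀ i, δ i ∈ Td)
    (c d : Fin K → ℝ) (hc : ∀ i, 0 < c i) (hd : ∀ i, 0 < d i)
    (p q : H) (hp : p = ∑ i, c i • U (γ i) φ) (hq : q = ∑ i, d i • U (δ i) φ)
    (η₀ : G) (hopt : ∀ η : G, ‖U η₀ p - q‖ ≤ ‖U η p - q‖)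
    (hη₀γ : ∀ i, η₀ * γ i ∈ Td) (hη₀δ : ∀ i, η₀⁻¹ * δ i ∈ Td)
    (ε : ℝ) (hε : 0 < ε)
    (hsmall : ‖U η₀ p - q‖ < ε * Real.sqrt (∑ i, c i ^ 2 + ∑ i, d i ^ 2))
    (α : ℝ) (hα0 : 0 ≤ α) (hα : α < Real.sqrt 2)
    (hRLI : ∀ χ : Fin (2 * K) → G, (∀ i, χ i ∈ Td) →
      IsRLI (fun i => U (χ i) φ) ε α)
    (ρ : ℝ) (hρ0 : 0 ≤ ρ)
    (hinc : ∀ η : G, ∀ η' ∈ Td, (¬ ∃ π : G, U π φ = φ ∧ η' = η * π) →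
      ∃ π : G, U π φ = φ ∧ ∀ γ' ∈ Td,
        ‖U (η * π * η'⁻¹) (U γ' φ) - U γ' φ‖ ≤ ρ * ‖U η φ - U η' φ‖) :
    sInf ((fun η => ‖U η p - q‖) ''
        {η : G | ∃ i j : Fin K, ∃ π : G, U π φ = φ ∧ η = δ i * π * (γ j)⁻¹})
      - ‖U η₀ p - q‖
      ≤ α * ρ * min (∑ i, |c i|) (∑ i, |d i|) := by
  have Umul : ∀ (g h : G) (v : H), U (g * h) v = U g (U h v) := by
    intro g h v; rw [map_mul]; rfl
  have Unorm : ∀ (g : G) (v : H), ‖U g v‖ = ‖v‖ := fun g v => (U g).norm_map v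
  have hw : ∀ g : G, ‖U g φ‖ = 1 := fun g => by rw [Unorm, hφ]
  have Uinv_fix : ∀ π : G, U π φ = φ → U π⁻¹ φ = φ := by
    intro π hπ
    have h1 : U π⁻¹ (U π φ) = φ := by
      rw [← Umul, inv_mul_cancel, map_one]; rfl
    rwa [hπ] at h1
  -- the combined family
  set χ : Fin (2 * K) → G := glue (fun k => η₀ * γ k) δ with hχdef
  set a : Fin (2 * K) → ℝ := glue c (fun k => -(d k)) with hadef
  have hχTd : ∀ i, χ i ∈ Td := by
    intro i
    rw [hχdef]
    unfold glue
    split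
    · exact hη₀γ _
    · exact hδTd _
  have hPsum : U η₀ p = ∑ k, c k • U (η₀ * γ k) φ := by
    rw [hp, map_sum]
    exact Finset.sum_congr rfl fun k _ => by rw [map_smul, Umul]
  have hsum1 : ∑ i, a i • U (χ i) φ = U η₀ p - q := by
    rw [sum_fin2 (fun i => a i • U (χ i) φ)]
    simp only [hχdef, hadef, glue_inl, glue_inr, neg_smul]
    rw [hPsum, hq, Finset.sum_neg_distrib, sub_eq_add_neg]
  have hsum2 : ∑ i, a i ^ 2 = ∑ i, c i ^ 2 + ∑ i, d i ^ 2 := by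
    rw [sum_fin2 (fun i => a i ^ 2)]
    simp only [hadef, glue_inl, glue_inr, neg_sq]
  obtain ⟨i, j, hi, hj, hnorm⟩ :=
    hRLI χ hχTd a (by rw [hsum1, hsum2]; exact hsmall)
  obtain ⟨s, rfl⟩ : ∃ s, fin2Equiv K s = i := ⟨_, (fin2Equiv K).apply_symm_apply i⟩
  obtain ⟨t, rfl⟩ : ∃ t, fin2Equiv K t = j := ⟨_, (fin2Equiv K).apply_symm_apply j⟩
  have key : ∃ j' i' : Fin K, ‖U (η₀ * γ j') φ - U (δ i') φ‖ ≤ α := by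
    rcases s with k₁ | k₁ <;> rcases t with k₂ | k₂ <;>
      simp only [hχdef, hadef, glue_inl, glue_inr] at hnorm
    · exfalso
      rw [aux_upos (hc k₁) (hw _), aux_upos (hc k₂) (hw _)] at hnorm
      have := aux_sqrt2 (hw _) (hw _) (hpos _ (hη₀γ k₁) _ (hη₀γ k₂))
      linarith
    · refine ⟨k₁, k₂, ?_⟩
      rw [aux_upos (hc k₁) (hw _), aux_uneg (neg_neg_of_pos (hd k₂)) (hw _),
        ← sub_eq_add_neg] at hnorm
      exact hnorm
    · refine ⟨k₂, k₁, ?_⟩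
      rw [aux_uneg (neg_neg_of_pos (hd k₁)) (hw _), aux_upos (hc k₂) (hw _),
        neg_add_eq_sub] at hnorm
      exact hnorm
    · exfalso
      rw [aux_uneg (neg_neg_of_pos (hd k₁)) (hw _),
        aux_uneg (neg_neg_of_pos (hd k₂)) (hw _), ← neg_add, norm_neg] at hnorm
      have := aux_sqrt2 (hw _) (hw _) (hpos _ (hδTd k₁) _ (hδTd k₂))
      linarith
  obtain ⟨j', i', hkey⟩ := key
  have hbdd : BddBelow ((fun η => ‖U η p - q‖) ''
      {η : G | ∃ i j : Fin K, ∃ π : G, U π φ = φ ∧ η = δ i * π * (γ j)⁻¹}) := by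
    refine ⟨0, ?_⟩
    rintro x ⟨η, -, rfl⟩
    exact norm_nonneg _
  have hmin0 : 0 ≤ min (∑ i, |c i|) (∑ i, |d i|) :=
    le_min (Finset.sum_nonneg fun i _ => abs_nonneg _)
      (Finset.sum_nonneg fun i _ => abs_nonneg _)
  by_cases hA : ∃ π : G, U π φ = φ ∧ δ i' = η₀ * γ j' * π
  · obtain ⟨π, hπ, hδeq⟩ := hA
    have hmem : η₀ ∈ {η : G | ∃ i j : Fin K, ∃ π : G, U π φ = φ ∧ η = δ i * π * (γ j)⁻¹} :=
      ⟨i', j', π⁻¹, Uinv_fix π hπ, by rw [hδeq]; group⟩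
    have h1 := csInf_le hbdd (Set.mem_image_of_mem _ hmem)
    have h2 : 0 ≤ α * ρ * min (∑ i, |c i|) (∑ i, |d i|) :=
      mul_nonneg (mul_nonneg hα0 hρ0) hmin0
    linarith
  · obtain ⟨π, hπφ, hb⟩ := hinc (η₀ * γ j') (δ i') (hδTd i') hA
    set θ : G := η₀ * γ j' * π * (δ i')⁻¹ with hθdef
    have hbound : ∀ g ∈ Td, ‖U θ (U g φ) - U g φ‖ ≤ α * ρ := by
      intro g hg
      have := (hb g hg).trans (mul_le_mul_of_nonneg_left hkey hρ0)
      linarith [this, mul_comm ρ α]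
    set η : G := δ i' * π⁻¹ * (γ j')⁻¹ with hηdef
    have hmem : η ∈ {η : G | ∃ i j : Fin K, ∃ π : G, U π φ = φ ∧ η = δ i * π * (γ j)⁻¹} :=
      ⟨i', j', π⁻¹, Uinv_fix π hπφ, rfl⟩
    have hθη : θ * η = η₀ := by rw [hθdef, hηdef]; group
    -- atom bounds
    have hcatom : ∀ k, ‖U (η * γ k) φ - U (η₀ * γ k) φ‖ ≤ α * ρ := by
      intro k
      have h1 : θ * (η * γ k) = η₀ * γ k := by rw [← mul_assoc, hθη]
      calc ‖U (η * γ k) φ - U (η₀ * γ k) φ‖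
          = ‖U θ (U (η * γ k) φ) - U θ (U (η₀ * γ k) φ)‖ := by
            rw [← map_sub, Unorm]
        _ = ‖U (η₀ * γ k) φ - U θ (U (η₀ * γ k) φ)‖ := by
            rw [← Umul, h1]
        _ = ‖U θ (U (η₀ * γ k) φ) - U (η₀ * γ k) φ‖ := norm_sub_rev _ _
        _ ≤ α * ρ := hbound _ (hη₀γ k)
    have hdatom : ∀ k, ‖U (δ k) φ - U θ (U (δ k) φ)‖ ≤ α * ρ := by
      intro k
      rw [norm_sub_rev]
      exact hbound _ (hδTd k)
    -- c-side bound
    have hdiff_c : U η p - U η₀ p = ∑ k, c k • (U (η * γ k) φ - U (η₀ * γ k) φ) := by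
      rw [hp, map_sum, map_sum, ← Finset.sum_sub_distrib]
      exact Finset.sum_congr rfl fun k _ => by
        rw [map_smul, map_smul, ← smul_sub, Umul η (γ k) φ, Umul η₀ (γ k) φ]
    have hnc : ‖U η p - U η₀ p‖ ≤ (α * ρ) * ∑ k, c k := by
      rw [hdiff_c]
      calc ‖∑ k, c k • (U (η * γ k) φ - U (η₀ * γ k) φ)‖
          ≤ ∑ k, ‖c k • (U (η * γ k) φ - U (η₀ * γ k) φ)‖ := norm_sum_le _ _
        _ ≤ ∑ k, c k * (α * ρ) := Finset.sum_le_sum fun k _ => by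
            rw [norm_smul, Real.norm_eq_abs, abs_of_pos (hc k)]
            exact mul_le_mul_of_nonneg_left (hcatom k) (hc k).le
        _ = (α * ρ) * ∑ k, c k := by rw [← Finset.sum_mul, mul_comm]
    have hval_c : ‖U η p - q‖ ≤ ‖U η₀ p - q‖ + (α * ρ) * ∑ k, c k := by
      calc ‖U η p - q‖ = ‖(U η₀ p - q) + (U η p - U η₀ p)‖ := by
            congr 1; abel
        _ ≤ ‖U η₀ p - q‖ + ‖U η p - U η₀ p‖ := norm_add_le _ _
        _ ≤ ‖U η₀ p - q‖ + (α * ρ) * ∑ k, c k := by linarith [hnc]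
    -- d-side bound
    have hdiff_d : q - U θ q = ∑ k, d k • (U (δ k) φ - U θ (U (δ k) φ)) := by
      rw [hq, map_sum, ← Finset.sum_sub_distrib]
      exact Finset.sum_congr rfl fun k _ => by
        rw [map_smul, ← smul_sub]
    have hnd : ‖q - U θ q‖ ≤ (α * ρ) * ∑ k, d k := by
      rw [hdiff_d]
      calc ‖∑ k, d k • (U (δ k) φ - U θ (U (δ k) φ))‖
          ≤ ∑ k, ‖d k • (U (δ k) φ - U θ (U (δ k) φ))‖ := norm_sum_le _ _
        _ ≤ ∑ k, d k * (α * ρ) := Finset.sum_le_sum fun k _ => by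
            rw [norm_smul, Real.norm_eq_abs, abs_of_pos (hd k)]
            exact mul_le_mul_of_nonneg_left (hdatom k) (hd k).le
        _ = (α * ρ) * ∑ k, d k := by rw [← Finset.sum_mul, mul_comm]
    have hval_d : ‖U η p - q‖ ≤ ‖U η₀ p - q‖ + (α * ρ) * ∑ k, d k := by
      have heq : ‖U η p - q‖ = ‖U η₀ p - U θ q‖ := by
        rw [← Unorm θ (U η p - q), map_sub, ← Umul, hθη]
      rw [heq]
      calc ‖U η₀ p - U θ q‖ = ‖(U η₀ p - q) + (q - U θ q)‖ := by
            congr 1; abel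
        _ ≤ ‖U η₀ p - q‖ + ‖q - U θ q‖ := norm_add_le _ _
        _ ≤ ‖U η₀ p - q‖ + (α * ρ) * ∑ k, d k := by linarith [hnd]
    -- combine
    have habs_c : ∑ i, |c i| = ∑ i, c i :=
      Finset.sum_congr rfl fun i _ => abs_of_pos (hc i)
    have habs_d : ∑ i, |d i| = ∑ i, d i :=
      Finset.sum_congr rfl fun i _ => abs_of_pos (hd i)
    have hs := csInf_le hbdd (Set.mem_image_of_mem (fun η => ‖U η p - q‖) hmem)
    rcases le_total (∑ i, |c i|) (∑ i, |d i|) with hmn | hmn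
    · rw [min_eq_left hmn, habs_c]
      have hαρ : 0 ≤ α * ρ := mul_nonneg hα0 hρ0
      linarith [hval_c, hs]
    · rw [min_eq_right hmn, habs_d]
      linarith [hval_d, hs]
end

section
/- Let ρ ≥ 0 and suppose that for all γ, γ' ∈ 𝒯_d and all η ∈ G, ‖U(η)φ_{γ'} − φ_{γ'}‖ ≤ ρ · ‖U(η)φ_γ − φ_γ‖ (the transformation inconsistency of the dictionary is at most ρ). Then for every η₀ ∈ G and all indices i*, j* ∈ {1, …, K}, inf_{η ∈ 𝒯_a^{p,q}} ‖U(η)p − q‖ ≤ ‖U(η₀)p − q‖ + ρ · ‖φ_{δ_{j*}} − U(η₀)φ_{γ_{i*}}‖ · Σ_{i=1}^K |c_i|. -/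
/-- intermediate bound in the proof of the main theorem. If the
transformation inconsistency of the dictionary is at most `ρ`, the approximate
distance is controlled by the distance at `η₀` plus `ρ` times the mismatch of a
single pair of atoms, scaled by `‖c‖₁`. -/
theorem stmt16 {H G : Type*} [NormedAddCommGroup H] [InnerProductSpace ℝ H]
    [Group G] (U : G →* (H ≃ₗᵢ[ℝ] H)) (φ : H) (Td : Set G)
    (K : ℕ) (hK : 1 ≤ K)
    (γ δ : Fin K → G) (hγTd : ∀ i, γ i ∈ Td) (hδTd : ∀ i, δ i ∈ Td)
    (c d : Fin K → ℝ)
    (p q : H) (hp : p = ∑ i, c i • U (γ i) φ) (hq : q = ∑ i, d i • U (δ i) φ)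
    (ρ : ℝ) (hρ0 : 0 ≤ ρ)
    (hinc : ∀ γ' ∈ Td, ∀ γ'' ∈ Td, ∀ η : G,
      ‖U η (U γ'' φ) - U γ'' φ‖ ≤ ρ * ‖U η (U γ' φ) - U γ' φ‖) :
    ∀ (η₀ : G) (istar jstar : Fin K),
      sInf ((fun η => ‖U η p - q‖) '' {η : G | ∃ i j, η = δ i * (γ j)⁻¹})
        ≤ ‖U η₀ p - q‖
          + ρ * ‖U (δ jstar) φ - U η₀ (U (γ istar) φ)‖ * ∑ i, |c i| := by
  intro η₀ istar jstar
  set η : G := δ jstar * (γ istar)⁻¹ with hη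
  have hmem : ‖U η p - q‖ ∈
      (fun η => ‖U η p - q‖) '' {η : G | ∃ i j, η = δ i * (γ j)⁻¹} :=
    ⟨η, ⟨jstar, istar, rfl⟩, rfl⟩
  have hbdd : BddBelow ((fun η => ‖U η p - q‖) '' {η : G | ∃ i j, η = δ i * (γ j)⁻¹}) := by
    refine ⟨0, ?_⟩
    rintro x ⟨a, -, rfl⟩
    exact norm_nonneg _
  refine le_trans (csInf_le hbdd hmem) ?_
  set η' : G := η₀⁻¹ * η with hη'
  have hUU : ∀ (g g' : G) (x : H), U g (U g' x) = U (g * g') x := by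
    intro g g' x
    rw [map_mul]
    rfl
  set M : ℝ := ‖U (δ jstar) φ - U η₀ (U (γ istar) φ)‖ with hM
  -- key: distance between U η x and U η₀ x equals ‖U η' x - x‖
  have hkey : ∀ x : H, ‖U η x - U η₀ x‖ = ‖U η' x - x‖ := by
    intro x
    have : U η x - U η₀ x = U η₀ (U η' x - x) := by
      rw [map_sub, hUU, hη', mul_inv_cancel_left]
    rw [this, LinearIsometryEquiv.norm_map]
  -- the atom mismatch at istar
  have hatom : ‖U η' (U (γ istar) φ) - U (γ istar) φ‖ = M := by
    have h1 : U η' (U (γ istar) φ) = U η₀⁻¹ (U (δ jstar) φ) := by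
      rw [hUU, hUU, hη', hη]
      group
    have h2 : U η₀ (U η₀⁻¹ (U (δ jstar) φ) - U (γ istar) φ)
        = U (δ jstar) φ - U η₀ (U (γ istar) φ) := by
      rw [map_sub, hUU, mul_inv_cancel, MonoidHom.map_one]
      rfl
    rw [h1, hM, ← h2, LinearIsometryEquiv.norm_map]
  -- bound ‖U η' p - p‖
  have hbound : ‖U η' p - p‖ ≤ ρ * M * ∑ i, |c i| := by
    have hsum : U η' p - p = ∑ i, c i • (U η' (U (γ i) φ) - U (γ i) φ) := by
      rw [hp, map_sum]
      simp [smul_sub, Finset.sum_sub_distrib, map_smul]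
    rw [hsum]
    calc ‖∑ i, c i • (U η' (U (γ i) φ) - U (γ i) φ)‖
        ≤ ∑ i, ‖c i • (U η' (U (γ i) φ) - U (γ i) φ)‖ := norm_sum_le _ _
      _ ≤ ∑ i, |c i| * (ρ * M) := by
          refine Finset.sum_le_sum fun i _ => ?_
          rw [norm_smul, Real.norm_eq_abs]
          refine mul_le_mul_of_nonneg_left ?_ (abs_nonneg _)
          calc ‖U η' (U (γ i) φ) - U (γ i) φ‖
              ≤ ρ * ‖U η' (U (γ istar) φ) - U (γ istar) φ‖ :=
                hinc _ (hγTd istar) _ (hγTd i) η'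
            _ = ρ * M := by rw [hatom]
      _ = ρ * M * ∑ i, |c i| := by rw [← Finset.sum_mul, mul_comm]
  calc ‖U η p - q‖ ≤ ‖U η₀ p - q‖ + ‖U η p - U η₀ p‖ := by
        have := norm_add_le (U η₀ p - q) (U η p - U η₀ p)
        simpa [sub_add_sub_cancel'] using this
    _ ≤ ‖U η₀ p - q‖ + ρ * M * ∑ i, |c i| := by
        rw [hkey]
        exact add_le_add_right hbound _
end
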